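/- Let ρ(c,z) be a normalized classical-quantum state over C×Z and F : C×Z → [0,∞) a function satisfying Σ_{c,z} F(c,z) R_α(ρ(c,z)|ρ(z)) ≤ 1. Fix q ∈ (0,1] and let Φ = {(c,z) : F(c,z) ≥ q^{−β}} and κ = Σ_{(c,z)∈Φ'} tr(ρ(c,z)) for any Φ' ⊆ Φ with κ > 0. Then Σ_{c,z} R_α(ρ(c,z | Φ') | ρ(z)) ≤ q^β / κ^α, where ρ(c,z|Φ') = 1_{Φ'}(c,z) ρ(c,z)/κ. -/

import Mathlib

open scoped Matrix BigOperators Classical ComplexOrder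

noncomputable section

/-- Real part of the trace of a complex matrix. -/
def rtr {d : ℕ} (M : Matrix (Fin d) (Fin d) ℂ) : ℝ := (Matrix.trace M).re

/-- Functional calculus applied to a matrix (junk value `0` if the matrix is not Hermitian). -/
def mfun {d : ℕ} (f : ℝ → ℝ) (A : Matrix (Fin d) (Fin d) ℂ) : Matrix (Fin d) (Fin d) ℂ :=
  if h : A.IsHermitian then h.cfc f else 0

/-- Positive part `[A]₊` of a Hermitian matrix. -/
def posPartM {d : ℕ} (A : Matrix (Fin d) (Fin d) ℂ) : Matrix (Fin d) (Fin d) ℂ :=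
  mfun (fun x => max x 0) A

/-- Projector onto the support of the positive part of a Hermitian matrix. -/
def posSuppProj {d : ℕ} (A : Matrix (Fin d) (Fin d) ℂ) : Matrix (Fin d) (Fin d) ℂ :=
  mfun (fun x => if 0 < x then 1 else 0) A

/-- Operator absolute value of a Hermitian matrix. -/
def absM {d : ℕ} (A : Matrix (Fin d) (Fin d) ℂ) : Matrix (Fin d) (Fin d) ℂ :=
  mfun (fun x => |x|) A

/-- Moore–Penrose (relative) power of a Hermitian matrix: `x ↦ x ^ p` on the support,
`0` on the kernel. -/
def mpow {d : ℕ} (A : Matrix (Fin d) (Fin d) ℂ) (p : ℝ) : Matrix (Fin d) (Fin d) ℂ :=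
  mfun (fun x => if x = 0 then 0 else x ^ p) A

/-- Support containment: the kernel of `σ` is contained in the kernel of `ρ`,
i.e. `supp ρ ⊆ supp σ` for positive semidefinite matrices. -/
def suppSubset {d : ℕ} (ρ σ : Matrix (Fin d) (Fin d) ℂ) : Prop :=
  ∀ v : Fin d → ℂ, σ.mulVec v = 0 → ρ.mulVec v = 0

/-- Sandwiched Rényi power `R_α(ρ|σ) = tr((σ^{-β/(2α)} ρ σ^{-β/(2α)})^α)`, `β = α - 1`. -/
def sandR {d : ℕ} (α : ℝ) (ρ σ : Matrix (Fin d) (Fin d) ℂ) : ℝ :=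
  rtr (mpow (mpow σ (-(α - 1) / (2 * α)) * ρ * mpow σ (-(α - 1) / (2 * α))) α)

/-- Petz Rényi power `tr(ρ^α σ^{-β})`, `β = α - 1`. -/
def petzR {d : ℕ} (α : ℝ) (ρ σ : Matrix (Fin d) (Fin d) ℂ) : ℝ :=
  rtr (mpow ρ α * mpow σ (-(α - 1)))



lemma rtr_mfun {d : ℕ} {A : Matrix (Fin d) (Fin d) ℂ} (hA : A.IsHermitian) (f : ℝ → ℝ) :
    rtr (mfun f A) = ∑ i, f (hA.eigenvalues i) := by
  rw [mfun, dif_pos hA, rtr]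
  rw [Matrix.IsHermitian.cfc, Unitary.conjStarAlgAut_apply, Matrix.trace_mul_cycle,
    Unitary.coe_star_mul_self, Matrix.one_mul, Matrix.trace_diagonal]
  simp [Function.comp]

lemma mfun_eq_cfc {d : ℕ} {A : Matrix (Fin d) (Fin d) ℂ} (hA : A.IsHermitian) (f : ℝ → ℝ) :
    mfun f A = cfc f A := by
  rw [mfun, dif_pos hA, hA.cfc_eq]

lemma mfun_isHermitian {d : ℕ} (f : ℝ → ℝ) (A : Matrix (Fin d) (Fin d) ℂ) :
    (mfun f A).IsHermitian := by
  by_cases h : A.IsHermitian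
  · rw [mfun, dif_pos h, Matrix.IsHermitian.cfc]
    apply Matrix.isHermitian_mul_mul_conjTranspose
    simp [Matrix.IsHermitian, Matrix.diagonal_conjTranspose]
  · rw [mfun, dif_neg h]; exact Matrix.isHermitian_zero

lemma eigenvalues_zero' {d : ℕ} (h0 : (0 : Matrix (Fin d) (Fin d) ℂ).IsHermitian) (i : Fin d) :
    h0.eigenvalues i = 0 := by
  haveI : Nonempty (Fin d) := ⟨i⟩
  have h : h0.eigenvalues i ∈ spectrum ℝ (0 : Matrix (Fin d) (Fin d) ℂ) := by
    rw [Matrix.IsHermitian.spectrum_real_eq_range_eigenvalues]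
    exact Set.mem_range_self i
  rwa [spectrum.zero_eq, Set.mem_singleton_iff] at h

-- sandwich is PSD
lemma sandwich_psd {d : ℕ} {ρ : Matrix (Fin d) (Fin d) ℂ} (hρ : ρ.PosSemidef)
    (p : ℝ) (σ : Matrix (Fin d) (Fin d) ℂ) :
    (mpow σ p * ρ * mpow σ p).PosSemidef := by
  have hB : (mpow σ p).IsHermitian := mfun_isHermitian _ _
  have := hρ.mul_mul_conjTranspose_same (mpow σ p)
  rwa [hB.eq] at this

lemma psd_spectrum_nonneg {d : ℕ} {X : Matrix (Fin d) (Fin d) ℂ} (hX : X.PosSemidef) :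
    ∀ x ∈ spectrum ℝ X, 0 ≤ x := by
  intro x hx
  rw [Matrix.IsHermitian.spectrum_real_eq_range_eigenvalues hX.1] at hx
  obtain ⟨i, rfl⟩ := hx
  exact hX.eigenvalues_nonneg i

lemma rtr_mfun_nonneg {d : ℕ} {X : Matrix (Fin d) (Fin d) ℂ} (hX : X.PosSemidef)
    {f : ℝ → ℝ} (hf : ∀ x, 0 ≤ x → 0 ≤ f x) : 0 ≤ rtr (mfun f X) := by
  rw [rtr_mfun hX.1]
  exact Finset.sum_nonneg fun i _ => hf _ (hX.eigenvalues_nonneg i)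

lemma sandR_nonneg {d : ℕ} {α : ℝ} (hα : 1 < α) {ρ : Matrix (Fin d) (Fin d) ℂ}
    (hρ : ρ.PosSemidef) (σ : Matrix (Fin d) (Fin d) ℂ) : 0 ≤ sandR α ρ σ := by
  refine rtr_mfun_nonneg (sandwich_psd hρ _ σ) ?_
  intro x hx
  by_cases h : x = 0 <;> simp [h, Real.rpow_nonneg hx]

lemma sandR_zero {d : ℕ} (α : ℝ) (σ : Matrix (Fin d) (Fin d) ℂ) : sandR α 0 σ = 0 := by
  rw [sandR, Matrix.mul_zero, Matrix.zero_mul, mpow, rtr_mfun Matrix.isHermitian_zero]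
  refine Finset.sum_eq_zero fun i _ => ?_
  rw [eigenvalues_zero']
  simp

lemma real_smul_matrix {d : ℕ} (r : ℝ) (M : Matrix (Fin d) (Fin d) ℂ) :
    ((r : ℂ)) • M = r • M := by
  ext i j; simp [Complex.real_smul]

lemma mpow_smul {d : ℕ} {X : Matrix (Fin d) (Fin d) ℂ} (hX : X.PosSemidef)
    {r : ℝ} (hr : 0 < r) {α : ℝ} (hα : 1 < α) :
    mpow (r • X) α = (r ^ α : ℝ) • mpow X α := by
  have hXh : X.IsHermitian := hX.1
  have hXsa : IsSelfAdjoint X := hXh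
  have hrXh : (r • X).IsHermitian := by
    unfold Matrix.IsHermitian at *
    rw [Matrix.conjTranspose_smul, hXh, star_trivial]
  set f : ℝ → ℝ := fun x => if x = 0 then 0 else x ^ α with hf
  have hc1 : ContinuousOn f ((r • ·) '' (spectrum ℝ X)) :=
    ((X.finite_real_spectrum).image _).continuousOn f
  have hc2 : ContinuousOn f (spectrum ℝ X) := (X.finite_real_spectrum).continuousOn f
  have heq : (spectrum ℝ X).EqOn (fun x => f (r • x)) (fun x => r ^ α * f x) := by
    intro x hx
    have hx0 : 0 ≤ x := psd_spectrum_nonneg hX x hx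
    simp only [smul_eq_mul, hf]
    by_cases h : x = 0
    · simp [h]
    · have hne : r * x ≠ 0 := by positivity
      rw [if_neg hne, if_neg h, Real.mul_rpow hr.le hx0]
  rw [mpow, mpow, mfun_eq_cfc hrXh, mfun_eq_cfc hXh,
    ← cfc_comp_smul r f X hc1 hXsa, cfc_congr heq, cfc_const_mul (r ^ α) f X hc2]

lemma rtr_smul {d : ℕ} (r : ℝ) (M : Matrix (Fin d) (Fin d) ℂ) :
    rtr (r • M) = r * rtr M := by
  rw [rtr, rtr, Matrix.trace_smul, Complex.smul_re, smul_eq_mul]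

lemma sandR_smul {d : ℕ} {α : ℝ} (hα : 1 < α) {ρ : Matrix (Fin d) (Fin d) ℂ}
    (hρ : ρ.PosSemidef) (σ : Matrix (Fin d) (Fin d) ℂ) {r : ℝ} (hr : 0 < r) :
    sandR α ((r : ℂ) • ρ) σ = r ^ α * sandR α ρ σ := by
  rw [sandR, sandR, Matrix.mul_smul, Matrix.smul_mul, real_smul_matrix,
    mpow_smul (sandwich_psd hρ _ σ) hr hα, rtr_smul]

/-- Conditional Rényi power bound from a QEF: conditioning a normalized cq state on a
high-QEF event `Φ' ⊆ {F ≥ q^{-β}}` of probability `κ` gives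
`Σ R_α(ρ(c,z|Φ')|ρ(z)) ≤ q^β / κ^α`. -/
theorem stmt10 {d : ℕ} {C Z : Type*} [Fintype C] [Fintype Z]
    (ρ : C × Z → Matrix (Fin d) (Fin d) ℂ) (hρ : ∀ p, (ρ p).PosSemidef)
    (hnorm : ∑ p, rtr (ρ p) = 1)
    (α : ℝ) (hα : 1 < α)
    (F : C × Z → ℝ) (hF : ∀ p, 0 ≤ F p)
    (hqef : ∑ p, F p * sandR α (ρ p) (∑ c, ρ (c, p.2)) ≤ 1)
    (q : ℝ) (hq0 : 0 < q) (hq1 : q ≤ 1)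
    (Φ' : Finset (C × Z)) (hΦ' : ∀ p ∈ Φ', q ^ (-(α - 1)) ≤ F p)
    (hκ : 0 < ∑ p ∈ Φ', rtr (ρ p)) :
    ∑ p : C × Z,
        sandR α (if p ∈ Φ' then (((∑ p' ∈ Φ', rtr (ρ p'))⁻¹ : ℝ) : ℂ) • ρ p else 0)
          (∑ c, ρ (c, p.2))
      ≤ q ^ (α - 1) / (∑ p ∈ Φ', rtr (ρ p)) ^ α := by
  set κ := ∑ p ∈ Φ', rtr (ρ p) with hκdef
  have hr : 0 < (κ⁻¹ : ℝ) := inv_pos.mpr hκ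
  have hterm : ∀ p : C × Z,
      sandR α (if p ∈ Φ' then ((κ⁻¹ : ℝ) : ℂ) • ρ p else 0) (∑ c, ρ (c, p.2))
        = if p ∈ Φ' then (κ⁻¹ : ℝ) ^ α * sandR α (ρ p) (∑ c, ρ (c, p.2)) else 0 := by
    intro p
    by_cases h : p ∈ Φ'
    · rw [if_pos h, if_pos h, sandR_smul hα (hρ p) _ hr]
    · rw [if_neg h, if_neg h, sandR_zero]
  rw [Finset.sum_congr rfl (fun p _ => hterm p), Finset.sum_ite_mem, Finset.univ_inter,
    ← Finset.mul_sum]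
  have hone : q ^ (α - 1) * q ^ (-(α - 1)) = 1 := by
    rw [← Real.rpow_add hq0]; simp
  have hS : ∑ p ∈ Φ', sandR α (ρ p) (∑ c, ρ (c, p.2)) ≤ q ^ (α - 1) := by
    have h1 : ∀ p ∈ Φ', sandR α (ρ p) (∑ c, ρ (c, p.2))
        ≤ q ^ (α - 1) * (F p * sandR α (ρ p) (∑ c, ρ (c, p.2))) := by
      intro p hp
      have hs := sandR_nonneg hα (hρ p) (∑ c, ρ (c, p.2))
      calc sandR α (ρ p) (∑ c, ρ (c, p.2))
          = q ^ (α - 1) * (q ^ (-(α - 1)) * sandR α (ρ p) (∑ c, ρ (c, p.2))) := by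
            rw [← mul_assoc, hone, one_mul]
        _ ≤ q ^ (α - 1) * (F p * sandR α (ρ p) (∑ c, ρ (c, p.2))) := by
            exact mul_le_mul_of_nonneg_left
              (mul_le_mul_of_nonneg_right (hΦ' p hp) hs) (Real.rpow_nonneg hq0.le _)
    calc ∑ p ∈ Φ', sandR α (ρ p) (∑ c, ρ (c, p.2))
        ≤ ∑ p ∈ Φ', q ^ (α - 1) * (F p * sandR α (ρ p) (∑ c, ρ (c, p.2))) :=
          Finset.sum_le_sum h1
      _ = q ^ (α - 1) * ∑ p ∈ Φ', F p * sandR α (ρ p) (∑ c, ρ (c, p.2)) :=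
          (Finset.mul_sum _ _ _).symm
      _ ≤ q ^ (α - 1) * ∑ p : C × Z, F p * sandR α (ρ p) (∑ c, ρ (c, p.2)) := by
          refine mul_le_mul_of_nonneg_left ?_ (Real.rpow_nonneg hq0.le _)
          refine Finset.sum_le_sum_of_subset_of_nonneg (Finset.subset_univ _) ?_
          intro p _ _
          exact mul_nonneg (hF p) (sandR_nonneg hα (hρ p) _)
      _ ≤ q ^ (α - 1) * 1 := mul_le_mul_of_nonneg_left hqef (Real.rpow_nonneg hq0.le _)
      _ = q ^ (α - 1) := mul_one _
  calc (κ⁻¹ : ℝ) ^ α * ∑ p ∈ Φ', sandR α (ρ p) (∑ c, ρ (c, p.2))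
      ≤ (κ⁻¹ : ℝ) ^ α * q ^ (α - 1) :=
        mul_le_mul_of_nonneg_left hS (Real.rpow_nonneg hr.le _)
    _ = q ^ (α - 1) / κ ^ α := by
        rw [Real.inv_rpow hκ.le, inv_mul_eq_div]
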